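/- arXiv:1911.13054 — 2 statements merged into one kernel-verified Lean document; each statement's English description precedes it below -/
import Mathlib

section
/- Let L, L' be nonempty sets of finite words over Σ with R = lcs(L) and R' = lcs(L'). Suppose R ∈ L and every word zR' ∈ L' with z ≠ ε satisfies R ≤ z^ω in the sense that R is a suffix of z^k for some (every sufficiently large) k. Then lcs(L·L') = R·R', where L·L' = {vw | v ∈ L, w ∈ L'}. -/
variable {α : Type*} [DecidableEq α]

/-- Longest common prefix of two finite words. -/
def lcp : List α → List α → List α
  | a :: u, b :: v => if a = b then a :: lcp u v else []
  | _, _ => []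

/-- Longest common suffix of two finite words. -/
def lcs (u v : List α) : List α := (lcp u.reverse v.reverse).reverse

/-- `wpow x k` is the `k`-fold concatenation `x^k`. -/
def wpow (x : List α) (k : ℕ) : List α := (List.replicate k x).flatten


/-- `R` is the longest common suffix of the language `L`. -/
def IsLCS (L : Set (List α)) (R : List α) : Prop :=
  (∀ w ∈ L, R <:+ w) ∧ ∀ s : List α, (∀ w ∈ L, s <:+ w) → s <:+ R

lemma wpow_succ (x : List α) (k : ℕ) : wpow x (k + 1) = x ++ wpow x k := by
  simp [wpow, List.replicate_succ]

lemma wpow_succ' (x : List α) (k : ℕ) : wpow x (k + 1) = wpow x k ++ x := by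
  simp [wpow, List.replicate_succ']

lemma suffix_append_right {u v w : List α} (h : u <:+ v) : u ++ w <:+ v ++ w := by
  obtain ⟨t, rfl⟩ := h
  exact ⟨t, by rw [List.append_assoc]⟩

lemma suffix_append_cancel {u v w : List α} (h : u ++ w <:+ v ++ w) : u <:+ v := by
  obtain ⟨t, ht⟩ := h
  rw [← List.append_assoc] at ht
  exact ⟨t, List.append_cancel_right ht⟩

theorem lcs_concat (L L' : Set (List α)) (R R' : List α)
    (hR : IsLCS L R) (hR' : IsLCS L' R') (hRL : R ∈ L)
    (hext : ∀ z : List α, z ++ R' ∈ L' → z ≠ [] → ∃ k, R <:+ wpow z k) :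
    IsLCS {w | ∃ v ∈ L, ∃ w' ∈ L', w = v ++ w'} (R ++ R') := by
  constructor
  · rintro w ⟨v, hv, w', hw', rfl⟩
    obtain ⟨z, rfl⟩ := hR'.1 w' hw'
    rw [← List.append_assoc]
    refine suffix_append_right ?_
    rcases eq_or_ne z [] with rfl | hz
    · simpa using hR.1 v hv
    · obtain ⟨k, hk⟩ := hext z hw' hz
      have h1 : R ++ z <:+ wpow z (k + 1) := by
        rw [wpow_succ']; exact suffix_append_right hk
      have h2 : R <:+ wpow z (k + 1) := by
        rw [wpow_succ]; exact hk.trans (List.suffix_append z (wpow z k))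
      have h3 : R <:+ R ++ z :=
        List.suffix_of_suffix_length_le h2 h1 (by simp)
      exact h3.trans (suffix_append_right (hR.1 v hv))
  · intro s hs
    rcases eq_or_ne s [] with rfl | hsne
    · exact List.nil_suffix
    obtain ⟨a, -⟩ := List.exists_mem_of_ne_nil s hsne
    rcases Set.eq_empty_or_nonempty L' with rfl | ⟨w0, hw0⟩
    · have := hR'.2 (a :: R') (by simp)
      have := this.length_le
      simp at this
    have hsR : ∀ w' ∈ L', s <:+ R ++ w' := fun w' h => hs _ ⟨R, hRL, w', h, rfl⟩
    rcases le_or_gt s.length R'.length with hle | hlt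
    · have hsuf : ∀ w' ∈ L', s <:+ w' := by
        intro w' h
        exact List.suffix_of_suffix_length_le (hsR w' h) (List.suffix_append R w')
          (hle.trans (hR'.1 w' h).length_le)
      exact (hR'.2 s hsuf).trans (List.suffix_append R R')
    · -- s = s₁ ++ s₂ with s₂ = R'
      set s₁ := s.take (s.length - R'.length) with hs₁def
      set s₂ := s.drop (s.length - R'.length) with hs₂def
      have hsplit : s = s₁ ++ s₂ := (List.take_append_drop _ s).symm
      have hlen₂ : s₂.length = R'.length := by
        rw [hs₂def, List.length_drop]; omega
      have hs₂R' : s₂ = R' := by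
        have h1 : s₂ <:+ R ++ w0 := (List.drop_suffix _ s).trans (hsR w0 hw0)
        have h2 : R' <:+ R ++ w0 := (hR'.1 w0 hw0).trans (List.suffix_append R w0)
        exact (List.suffix_of_suffix_length_le h1 h2 (by omega)).eq_of_length hlen₂
      rw [hs₂R'] at hsplit
      have key : ∀ v ∈ L, ∀ z, z ++ R' ∈ L' → s₁ <:+ v ++ z := by
        intro v hv z hz
        have := hs _ ⟨v, hv, z ++ R', hz, rfl⟩
        rw [hsplit, ← List.append_assoc] at this
        exact suffix_append_cancel this
      have hlen₁ : s₁.length = s.length - R'.length := by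
        rw [hs₁def, List.length_take]; omega
      rcases le_or_gt s₁.length R.length with h1le | h1lt
      · obtain ⟨z0, rfl⟩ := hR'.1 w0 hw0
        have hs₁R : s₁ <:+ R := by
          rcases eq_or_ne z0 [] with rfl | hz0
          · refine hR.2 s₁ fun v hv => ?_
            simpa using key v hv [] (by simpa using hw0)
          · obtain ⟨k, hk⟩ := hext z0 hw0 hz0
            have h1 : s₁ <:+ wpow z0 (k + 1) := by
              rw [wpow_succ']
              exact (key R hRL z0 hw0).trans (suffix_append_right hk)
            have h2 : R <:+ wpow z0 (k + 1) := by
              rw [wpow_succ]; exact hk.trans (List.suffix_append z0 (wpow z0 k))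
            exact List.suffix_of_suffix_length_le h1 h2 h1le
        rw [hsplit]
        exact suffix_append_right hs₁R
      · exfalso
        set e := s₁.drop R.length with hedef
        have helen : e.length = s₁.length - R.length := by
          rw [hedef, List.length_drop]
        have hcommon : ∀ w' ∈ L', e ++ R' <:+ w' := by
          intro w' h
          obtain ⟨z, rfl⟩ := hR'.1 w' h
          have h1 : s₁ <:+ R ++ z := key R hRL z h
          have hz : e.length ≤ z.length := by
            have := h1.length_le
            simp at this; omega
          have h2 : e <:+ R ++ z := (List.drop_suffix _ s₁).trans h1
          have h3 : e <:+ z :=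
            List.suffix_of_suffix_length_le h2 (List.suffix_append R z) hz
          exact suffix_append_right h3
        have hlast := (hR'.2 _ hcommon).length_le
        rw [List.length_append] at hlast
        omega
end

section
/- Let L, L' be sets of finite words over Σ. If lcs(L) is not a suffix of lcs(L') and lcs(L') is not a suffix of lcs(L), then lcs(L ∪ L') = lcs(lcs(L), lcs(L')) and moreover lcs(L ∪ L') is a proper suffix of both lcs(L) and lcs(L'); in this case the maximal suffix extension of L ∪ L' is empty: for every word u, lcs(u·(L ∪ L')) = lcs(L ∪ L'). -/
variable {α : Type*} [DecidableEq α]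

theorem lcp_prefix_left : ∀ u v : List α, lcp u v <+: u
  | a :: u, b :: v => by
    by_cases h : a = b
    · simp only [lcp, if_pos h]; exact List.cons_prefix_cons.mpr ⟨rfl, lcp_prefix_left u v⟩
    · simp [lcp, h]
  | [], _ => by simp [lcp]
  | a :: u, [] => by simp [lcp]

theorem lcp_prefix_right : ∀ u v : List α, lcp u v <+: v
  | a :: u, b :: v => by
    by_cases h : a = b
    · subst h; simp only [lcp, if_pos rfl]; exact List.cons_prefix_cons.mpr ⟨rfl, lcp_prefix_right u v⟩
    · simp [lcp, h]
  | [], _ => by simp [lcp]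
  | a :: u, [] => by simp [lcp]

theorem prefix_lcp : ∀ u v s : List α, s <+: u → s <+: v → s <+: lcp u v
  | _, _, [] => by simp
  | a :: u, b :: v, c :: s => by
    intro h1 h2
    obtain ⟨t1, ht1⟩ := h1
    obtain ⟨t2, ht2⟩ := h2
    simp only [List.cons_append] at ht1 ht2
    obtain ⟨rfl, hu⟩ := List.cons.injEq .. ▸ ht1
    obtain ⟨rfl, hv⟩ := List.cons.injEq .. ▸ ht2
    simp only [lcp, if_pos rfl]; exact List.cons_prefix_cons.mpr ⟨rfl, prefix_lcp u v s ⟨t1, hu⟩ ⟨t2, hv⟩⟩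
  | [], _, c :: s => by intro h; simp at h
  | a :: u, [], c :: s => by intro _ h; simp at h

theorem lcs_suffix_left (u v : List α) : lcs u v <:+ u := by
  have := lcp_prefix_left u.reverse v.reverse
  rw [← List.reverse_suffix] at this
  simpa [lcs] using this

theorem lcs_suffix_right (u v : List α) : lcs u v <:+ v := by
  have := lcp_prefix_right u.reverse v.reverse
  rw [← List.reverse_suffix] at this
  simpa [lcs] using this

theorem suffix_lcs {u v s : List α} (h1 : s <:+ u) (h2 : s <:+ v) : s <:+ lcs u v := by
  have := prefix_lcp u.reverse v.reverse s.reverse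
    (List.reverse_prefix.mpr h1) (List.reverse_prefix.mpr h2)
  rw [← List.reverse_prefix]
  simpa [lcs] using this

theorem lcs_union_incomparable (L L' : Set (List α)) (R R' : List α)
    (hR : IsLCS L R) (hR' : IsLCS L' R')
    (h1 : ¬ R <:+ R') (h2 : ¬ R' <:+ R) :
    IsLCS (L ∪ L') (lcs R R') ∧
    (lcs R R' <:+ R ∧ lcs R R' ≠ R) ∧
    (lcs R R' <:+ R' ∧ lcs R R' ≠ R') ∧
    ∀ u : List α, IsLCS {w | ∃ v ∈ L ∪ L', w = u ++ v} (lcs R R') := by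
  set t := lcs R R' with ht
  have htR : t <:+ R := lcs_suffix_left R R'
  have htR' : t <:+ R' := lcs_suffix_right R R'
  have hne : t ≠ R := fun h => h1 (h ▸ htR')
  have hne' : t ≠ R' := fun h => h2 (h ▸ htR)
  -- decompose R = p ++ a :: t
  have decomp : ∀ X : List α, t <:+ X → t ≠ X → ∃ p a, X = p ++ a :: t := by
    intro X hs hne
    obtain ⟨q, rfl⟩ := hs
    rcases List.eq_nil_or_concat q with rfl | ⟨p, a, rfl⟩
    · simp at hne
    · exact ⟨p, a, by simp⟩
  obtain ⟨p, a, hRa⟩ := decomp R htR hne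
  obtain ⟨p', b, hRb⟩ := decomp R' htR' hne'
  have hab : a ≠ b := by
    rintro rfl
    have : a :: t <:+ t := suffix_lcs (hRa ▸ ⟨p, rfl⟩) (hRb ▸ ⟨p', rfl⟩)
    have := this.length_le
    simp at this
  -- key lemma: suffixes of the form x ++ c :: t of a common word have equal c
  have key : ∀ (m : List α) (c d : α), c :: t <:+ m → d :: t <:+ m → c = d := by
    intro m c d hc hd
    rcases List.suffix_or_suffix_of_suffix hc hd with h | h
    · have := List.IsSuffix.eq_of_length h (by simp)
      exact (List.cons.injEq .. ▸ this).1
    · have := List.IsSuffix.eq_of_length h (by simp)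
      exact ((List.cons.injEq .. ▸ this).1).symm
  -- main maximality for arbitrary u (including u = [])
  have main : ∀ u s : List α, (∀ w ∈ L, s <:+ u ++ w) → (∀ w ∈ L', s <:+ u ++ w) →
      s <:+ t := by
    intro u s hL hL'
    -- L and L' are nonempty
    have hLne : L.Nonempty := by
      by_contra h
      rw [Set.not_nonempty_iff_eq_empty] at h
      have : a :: R <:+ R := hR.2 _ (by simp [h])
      have := this.length_le; simp at this
    have hL'ne : L'.Nonempty := by
      by_contra h
      rw [Set.not_nonempty_iff_eq_empty] at h
      have : a :: R' <:+ R' := hR'.2 _ (by simp [h])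
      have := this.length_le; simp at this
    obtain ⟨w, hw⟩ := hLne
    obtain ⟨w', hw'⟩ := hL'ne
    have hat : a :: t <:+ u ++ w :=
      (List.IsSuffix.trans (List.IsSuffix.trans ⟨p, by simp [hRa]⟩ (hR.1 w hw)) (List.suffix_append u w))
    have hbt : b :: t <:+ u ++ w' :=
      (List.IsSuffix.trans (List.IsSuffix.trans ⟨p', by simp [hRb]⟩ (hR'.1 w' hw'))
        (List.suffix_append u w'))
    by_contra hst
    -- s and t are both suffixes of u ++ w, so t <:+ s properly
    have hts : t <:+ s := by
      rcases List.suffix_or_suffix_of_suffix (hL w hw)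
        (htR.trans ((hR.1 w hw).trans (List.suffix_append u w))) with h | h
      · exact absurd h hst
      · exact h
    have htsne : t ≠ s := fun h => hst (h ▸ List.suffix_rfl)
    obtain ⟨q, c, hsc⟩ := decomp s hts htsne
    have hcs : c :: t <:+ s := hsc ▸ ⟨q, rfl⟩
    have hca : c = a := key (u ++ w) c a (hcs.trans (hL w hw)) hat
    have hcb : c = b := key (u ++ w') c b (hcs.trans (hL' w' hw')) hbt
    exact hab (hca ▸ hcb)
  refine ⟨⟨?_, ?_⟩, ⟨htR, hne⟩, ⟨htR', hne'⟩, ?_⟩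
  · rintro w (hw | hw)
    · exact htR.trans (hR.1 w hw)
    · exact htR'.trans (hR'.1 w hw)
  · intro s hs
    exact main [] s (fun w hw => by simpa using hs w (Or.inl hw))
      (fun w hw => by simpa using hs w (Or.inr hw))
  · intro u
    constructor
    · rintro w ⟨v, hv | hv, rfl⟩
      · exact (htR.trans (hR.1 v hv)).trans (List.suffix_append u v)
      · exact (htR'.trans (hR'.1 v hv)).trans (List.suffix_append u v)
    · intro s hs
      exact main u s (fun w hw => hs _ ⟨w, Or.inl hw, rfl⟩)
        (fun w hw => hs _ ⟨w, Or.inr hw, rfl⟩)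
end
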